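/- Let n be an odd perfect number, let q be a prime dividing n, and let β be the exponent of q in the prime factorization of n; suppose β is odd. Then σ(q^β) = 1 + q + ⋯ + q^β is congruent to 2 modulo 4, and the odd number σ(q^β)/2 divides n/q^β; in particular σ(q^β)/2 is coprime to q. -/

import Mathlib

open ArithmeticFunction Finset
open scoped ArithmeticFunction.sigma

/-- If `n` is an odd perfect number and `q` is a prime dividing `n` with odd
multiplicity `β`, then `σ(q^β) ≡ 2 [MOD 4]`, the odd number `σ(q^β)/2` divides
`n / q^β`, and `σ(q^β)/2` is coprime to `q`. -/
theorem stmt2 (n q : ℕ) (hn_odd : Odd n) (hn_perf : n.Perfect)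
    (hq_prime : q.Prime) (hq_dvd : q ∣ n)
    (β : ℕ) (hβ : β = n.factorization q) (hβ_odd : Odd β) :
    ArithmeticFunction.sigma 1 (q ^ β) % 4 = 2 ∧
      Odd (ArithmeticFunction.sigma 1 (q ^ β) / 2) ∧
      (ArithmeticFunction.sigma 1 (q ^ β) / 2) ∣ n / q ^ β ∧
      Nat.Coprime (ArithmeticFunction.sigma 1 (q ^ β) / 2) q := by
  have hn0 : 0 < n := hn_perf.2
  set m := n / q ^ β with hm
  have hnm : q ^ β * m = n := by
    rw [hm, hβ]; exact Nat.ordProj_mul_ordCompl_eq_self n q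
  have hcop : Nat.Coprime (q ^ β) m := by
    rw [hm, hβ]
    exact (Nat.coprime_ordCompl hq_prime hn0.ne').pow_left _
  have hodd_dvd : ∀ d : ℕ, d ∣ n → Odd d := by
    intro d hd
    rcases Nat.even_or_odd d with he | ho
    · exact absurd (even_iff_two_dvd.mpr (he.two_dvd.trans hd))
        (Nat.not_even_iff_odd.mpr hn_odd)
    · exact ho
  have hq_odd : Odd q := hodd_dvd q hq_dvd
  have hm_odd : Odd m := hodd_dvd m ⟨q ^ β, by rw [mul_comm]; exact hnm.symm⟩
  have hperf : σ 1 n = 2 * n := by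
    rw [sigma_one_apply]
    exact (Nat.perfect_iff_sum_divisors_eq_two_mul hn0).mp hn_perf
  have hmul : σ 1 (q ^ β) * σ 1 m = 2 * (q ^ β * m) := by
    rw [← ArithmeticFunction.IsMultiplicative.map_mul_of_coprime
      ArithmeticFunction.isMultiplicative_sigma hcop, hnm, hperf]
  have hS : σ 1 (q ^ β) = 1 + q * ∑ i ∈ range β, q ^ i := by
    rw [sigma_one_apply, Nat.sum_divisors_prime_pow hq_prime, Finset.sum_range_succ']
    simp [Finset.mul_sum, pow_succ, mul_comm, add_comm]
  have hSeven : σ 1 (q ^ β) % 2 = 0 := by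
    rw [sigma_one_apply, Nat.sum_divisors_prime_pow hq_prime]
    rw [Finset.sum_nat_mod]
    have : ∀ i ∈ range (β + 1), q ^ i % 2 = 1 := fun i _ => Nat.odd_iff.mp hq_odd.pow
    rw [Finset.sum_congr rfl this]
    have := Nat.odd_iff.mp hβ_odd
    simp
    omega
  -- write σ(q^β) = 2 * s
  obtain ⟨s, hs⟩ : 2 ∣ σ 1 (q ^ β) := Nat.dvd_of_mod_eq_zero hSeven
  have hkey : s * σ 1 m = q ^ β * m := by
    have : 2 * (s * σ 1 m) = 2 * (q ^ β * m) := by rw [← hmul, hs]; ring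
    omega
  have hodd_sT : Odd (s * σ 1 m) := by
    rw [hkey]; exact (hq_odd.pow).mul hm_odd
  have hs_odd : Odd s := (Nat.odd_mul.mp hodd_sT).1
  have hdiv2 : σ 1 (q ^ β) / 2 = s := by omega
  have hs_cop_q : Nat.Coprime s q := by
    rw [Nat.coprime_comm, hq_prime.coprime_iff_not_dvd]
    intro hdvd
    have h1 : q ∣ σ 1 (q ^ β) := hs ▸ hdvd.mul_left 2
    rw [hS] at h1
    have : q ∣ 1 := (Nat.dvd_add_right (Dvd.intro _ rfl)).mp (by rwa [add_comm] at h1)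
    exact hq_prime.one_lt.ne' (Nat.dvd_one.mp this)
  have hs_dvd_m : s ∣ m := by
    have h1 : s ∣ q ^ β * m := ⟨σ 1 m, hkey.symm⟩
    exact ((hs_cop_q.pow_right β).dvd_of_dvd_mul_left h1)
  refine ⟨?_, ?_, ?_, ?_⟩
  · obtain ⟨k, hk⟩ := hs_odd
    omega
  · rw [hdiv2]; exact hs_odd
  · rw [hdiv2]; exact hs_dvd_m
  · rw [hdiv2]; exact hs_cop_q
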